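/- arXiv:1810.01697 — 2 statements merged into one kernel-verified Lean document; each statement's English description precedes it below -/
import Mathlib

section
/- Let U, Δ₃, Δ₄ be positive reals with Δ₃ ≠ Δ₄, set s = sin(2U)/(2U), and let θ₁, θ₂ be reals with sin θ₁ ≠ 0 and cos θ₂ ≠ 0. For k = 1, 2 let B_k, A3_k, A4_k, a3_k, a4_k be positive reals, and let A1, A2 be positive reals. Assume: (i) A1/B₁ = (1/2)(1 − s)/sin²θ₁; (ii) A2/B₂ = (1/2)(1 + s)/cos²θ₂; (iii) (1 + Δ₃) · a3_k^{Δ₃} · (A3_k/B_k) = U^{Δ₃} for k = 1, 2; (iv) (1 + Δ₄) · a4_k^{Δ₄} · (A4_k/B_k) = U^{Δ₄} for k = 1, 2. Then A2 · (A3₂)^{Δ₄/(Δ₃−Δ₄)} · (A4₂)^{−Δ₃/(Δ₃−Δ₄)} · (a4₂/a3₂)^{−Δ₃Δ₄/(Δ₃−Δ₄)} · cos²θ₂ + A1 · (A3₁)^{Δ₄/(Δ₃−Δ₄)} · (A4₁)^{−Δ₃/(Δ₃−Δ₄)} · (a4₁/a3₁)^{−Δ₃Δ₄/(Δ₃−Δ₄)}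 · sin²θ₁ = [(1 + Δ₄)^{1/Δ₄}/(1 + Δ₃)^{1/Δ₃}]^{Δ₃Δ₄/(Δ₃−Δ₄)}. -/
open Real

lemma key_hybrid (U Δ₃ Δ₄ : ℝ) (hU : 0 < U) (hΔ₃ : 0 < Δ₃) (hΔ₄ : 0 < Δ₄)
    (hne : Δ₃ ≠ Δ₄) (B A3 A4 a3 a4 : ℝ) (hB : 0 < B) (hA3 : 0 < A3) (hA4 : 0 < A4)
    (ha3 : 0 < a3) (ha4 : 0 < a4)
    (h3 : (1 + Δ₃) * a3 ^ Δ₃ * (A3 / B) = U ^ Δ₃)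
    (h4 : (1 + Δ₄) * a4 ^ Δ₄ * (A4 / B) = U ^ Δ₄) :
    A3 ^ (Δ₄ / (Δ₃ - Δ₄)) * A4 ^ (-Δ₃ / (Δ₃ - Δ₄)) * (a4 / a3) ^ (-(Δ₃ * Δ₄) / (Δ₃ - Δ₄))
      = ((1 + Δ₄) ^ (1 / Δ₄) / (1 + Δ₃) ^ (1 / Δ₃)) ^ (Δ₃ * Δ₄ / (Δ₃ - Δ₄)) / B := by
  have h13 : (0:ℝ) < 1 + Δ₃ := by linarith
  have h14 : (0:ℝ) < 1 + Δ₄ := by linarith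
  have hsub : Δ₃ - Δ₄ ≠ 0 := sub_ne_zero.mpr hne
  have hLpos : 0 < A3 ^ (Δ₄ / (Δ₃ - Δ₄)) * A4 ^ (-Δ₃ / (Δ₃ - Δ₄)) *
      (a4 / a3) ^ (-(Δ₃ * Δ₄) / (Δ₃ - Δ₄)) :=
    mul_pos (mul_pos (rpow_pos_of_pos hA3 _) (rpow_pos_of_pos hA4 _))
      (rpow_pos_of_pos (div_pos ha4 ha3) _)
  have hRpos : 0 < ((1 + Δ₄) ^ (1 / Δ₄) / (1 + Δ₃) ^ (1 / Δ₃)) ^ (Δ₃ * Δ₄ / (Δ₃ - Δ₄)) / B :=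
    div_pos (rpow_pos_of_pos (div_pos (rpow_pos_of_pos h14 _) (rpow_pos_of_pos h13 _)) _) hB
  have e3 : Real.log (1 + Δ₃) + Δ₃ * Real.log a3 + Real.log A3 - Real.log B
      = Δ₃ * Real.log U := by
    have := congrArg Real.log h3
    rw [Real.log_mul (by positivity) (by positivity), Real.log_mul (by positivity) (by positivity),
      Real.log_div hA3.ne' hB.ne', Real.log_rpow ha3, Real.log_rpow hU] at this
    linarith
  have e4 : Real.log (1 + Δ₄) + Δ₄ * Real.log a4 + Real.log A4 - Real.log B
      = Δ₄ * Real.log U := by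
    have := congrArg Real.log h4
    rw [Real.log_mul (by positivity) (by positivity), Real.log_mul (by positivity) (by positivity),
      Real.log_div hA4.ne' hB.ne', Real.log_rpow ha4, Real.log_rpow hU] at this
    linarith
  have hlog : Real.log (A3 ^ (Δ₄ / (Δ₃ - Δ₄)) * A4 ^ (-Δ₃ / (Δ₃ - Δ₄)) *
      (a4 / a3) ^ (-(Δ₃ * Δ₄) / (Δ₃ - Δ₄)))
      = Real.log (((1 + Δ₄) ^ (1 / Δ₄) / (1 + Δ₃) ^ (1 / Δ₃)) ^ (Δ₃ * Δ₄ / (Δ₃ - Δ₄)) / B) := by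
    rw [Real.log_mul (by positivity) (by positivity), Real.log_mul (by positivity) (by positivity),
      Real.log_rpow hA3, Real.log_rpow hA4, Real.log_rpow (div_pos ha4 ha3),
      Real.log_div ha4.ne' ha3.ne',
      Real.log_div (by positivity) hB.ne',
      Real.log_rpow (div_pos (rpow_pos_of_pos h14 _) (rpow_pos_of_pos h13 _)),
      Real.log_div (by positivity) (by positivity),
      Real.log_rpow h14, Real.log_rpow h13]
    field_simp
    linear_combination Δ₄*e3 - Δ₃*e4
  calc A3 ^ (Δ₄ / (Δ₃ - Δ₄)) * A4 ^ (-Δ₃ / (Δ₃ - Δ₄)) * (a4 / a3) ^ (-(Δ₃ * Δ₄) / (Δ₃ - Δ₄))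
      = Real.exp (Real.log (A3 ^ (Δ₄ / (Δ₃ - Δ₄)) * A4 ^ (-Δ₃ / (Δ₃ - Δ₄)) *
        (a4 / a3) ^ (-(Δ₃ * Δ₄) / (Δ₃ - Δ₄)))) := (Real.exp_log hLpos).symm
    _ = _ := by rw [hlog, Real.exp_log hRpos]


theorem secondary_complete_hybrid_formula_first_variant
    (U Δ₃ Δ₄ : ℝ) (hU : 0 < U) (hΔ₃ : 0 < Δ₃) (hΔ₄ : 0 < Δ₄) (hne : Δ₃ ≠ Δ₄)
    (θ₁ θ₂ : ℝ) (hθ₁ : Real.sin θ₁ ≠ 0) (hθ₂ : Real.cos θ₂ ≠ 0)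
    (B₁ B₂ A3₁ A3₂ A4₁ A4₂ a3₁ a3₂ a4₁ a4₂ A1 A2 : ℝ)
    (hB₁ : 0 < B₁) (hB₂ : 0 < B₂)
    (hA3₁ : 0 < A3₁) (hA3₂ : 0 < A3₂) (hA4₁ : 0 < A4₁) (hA4₂ : 0 < A4₂)
    (ha3₁ : 0 < a3₁) (ha3₂ : 0 < a3₂) (ha4₁ : 0 < a4₁) (ha4₂ : 0 < a4₂)
    (hA1 : 0 < A1) (hA2 : 0 < A2)
    (h1 : A1 / B₁ = 1 / 2 * (1 - Real.sin (2 * U) / (2 * U)) / Real.sin θ₁ ^ 2)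
    (h2 : A2 / B₂ = 1 / 2 * (1 + Real.sin (2 * U) / (2 * U)) / Real.cos θ₂ ^ 2)
    (h3₁ : (1 + Δ₃) * a3₁ ^ Δ₃ * (A3₁ / B₁) = U ^ Δ₃)
    (h3₂ : (1 + Δ₃) * a3₂ ^ Δ₃ * (A3₂ / B₂) = U ^ Δ₃)
    (h4₁ : (1 + Δ₄) * a4₁ ^ Δ₄ * (A4₁ / B₁) = U ^ Δ₄)
    (h4₂ : (1 + Δ₄) * a4₂ ^ Δ₄ * (A4₂ / B₂) = U ^ Δ₄) :
    A2 * A3₂ ^ (Δ₄ / (Δ₃ - Δ₄)) * A4₂ ^ (-Δ₃ / (Δ₃ - Δ₄)) *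
        (a4₂ / a3₂) ^ (-(Δ₃ * Δ₄) / (Δ₃ - Δ₄)) * Real.cos θ₂ ^ 2 +
      A1 * A3₁ ^ (Δ₄ / (Δ₃ - Δ₄)) * A4₁ ^ (-Δ₃ / (Δ₃ - Δ₄)) *
        (a4₁ / a3₁) ^ (-(Δ₃ * Δ₄) / (Δ₃ - Δ₄)) * Real.sin θ₁ ^ 2 =
    ((1 + Δ₄) ^ (1 / Δ₄) / (1 + Δ₃) ^ (1 / Δ₃)) ^ (Δ₃ * Δ₄ / (Δ₃ - Δ₄)) := by
  have k1 := key_hybrid U Δ₃ Δ₄ hU hΔ₃ hΔ₄ hne B₁ A3₁ A4₁ a3₁ a4₁ hB₁ hA3₁ hA4₁ ha3₁ ha4₁ h3₁ h4₁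
  have k2 := key_hybrid U Δ₃ Δ₄ hU hΔ₃ hΔ₄ hne B₂ A3₂ A4₂ a3₂ a4₂ hB₂ hA3₂ hA4₂ ha3₂ ha4₂ h3₂ h4₂
  set C := ((1 + Δ₄) ^ (1 / Δ₄) / (1 + Δ₃) ^ (1 / Δ₃)) ^ (Δ₃ * Δ₄ / (Δ₃ - Δ₄)) with hC
  have e1 : A1 * Real.sin θ₁ ^ 2 = B₁ * (1 / 2 * (1 - Real.sin (2 * U) / (2 * U))) := by
    have h1' := (div_eq_iff hB₁.ne').mp h1
    rw [h1']; field_simp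
  have e2 : A2 * Real.cos θ₂ ^ 2 = B₂ * (1 / 2 * (1 + Real.sin (2 * U) / (2 * U))) := by
    have h2' := (div_eq_iff hB₂.ne').mp h2
    rw [h2']; field_simp
  have r2 : A2 * A3₂ ^ (Δ₄ / (Δ₃ - Δ₄)) * A4₂ ^ (-Δ₃ / (Δ₃ - Δ₄)) *
      (a4₂ / a3₂) ^ (-(Δ₃ * Δ₄) / (Δ₃ - Δ₄)) * Real.cos θ₂ ^ 2
      = A2 * (C / B₂) * Real.cos θ₂ ^ 2 := by
    rw [← k2]; ring
  have r1 : A1 * A3₁ ^ (Δ₄ / (Δ₃ - Δ₄)) * A4₁ ^ (-Δ₃ / (Δ₃ - Δ₄)) *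
      (a4₁ / a3₁) ^ (-(Δ₃ * Δ₄) / (Δ₃ - Δ₄)) * Real.sin θ₁ ^ 2
      = A1 * (C / B₁) * Real.sin θ₁ ^ 2 := by
    rw [← k1]; ring
  rw [r1, r2]
  field_simp
  linear_combination (C * B₁) * e2 + (C * B₂) * e1
end

section
/- Let U, Δ₃, Δ₄ be positive reals with Δ₃ ≠ Δ₄ and set s = sin(2U)/(2U). Let θ₁, θ₂ be reals with sin θ₁ ≠ 0, cos θ₂ ≠ 0; for k = 1, 2 let B_k, A3_k, A4_k, a3_k, a4_k be positive reals and A1, A2 positive reals satisfying: (i) A1/B₁ = (1/2)(1 − s)/sin²θ₁; (ii) A2/B₂ = (1/2)(1 + s)/cos²θ₂; (iii) (1 + Δ₃) · a3_k^{Δ₃} · (A3_k/B_k) = U^{Δ₃} and (1 + Δ₄) · a4_k^{Δ₄} · (A4_k/B_k) = U^{Δ₄} for k = 1, 2. Further, for k = 3, 4 let B_k, A1_k, A2_k be positive reals and θ1_k, θ2_k reals with sin θ1_k ≠ 0, cos θ2_k ≠ 0 satisfying A1_k/B_k = (1/2)(1 − s)/sin²(θ1_k) and A2_k/B_k = (1/2)(1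 + s)/cos²(θ2_k), and let a₃, a₄, A₃, A₄ be positive reals with (1 + Δ₃) · a₃^{Δ₃} · (A₃/B₃) = U^{Δ₃} and (1 + Δ₄) · a₄^{Δ₄} · (A₄/B₄) = U^{Δ₄}. Then A2 · (A3₂)^{Δ₄/(Δ₃−Δ₄)} · (A4₂)^{−Δ₃/(Δ₃−Δ₄)} · (a4₂/a3₂)^{−Δ₃Δ₄/(Δ₃−Δ₄)} · cos²θ₂ + A1 · (A3₁)^{Δ₄/(Δ₃−Δ₄)} · (A4₁)^{−Δ₃/(Δ₃−Δ₄)} · (a4₁/a3₁)^{−Δ₃Δ₄/(Δ₃−Δ₄)} · sin²θ₁ = (a₃/a₄)^{Δ₃Δ₄/(Δ₃−Δ₄)} · (A₃ / (A2₃·cos²(θ2₃) + A1₃·sin²(θ1₃)))^{Δ₄/(Δ₃−Δ₄)} · (A₄ / (A2₄·cos²(θ2₄) + A1₄·sin²(θ1₄)))^{−Δ₃/(Δ₃−Δ₄)}. -/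
open Real

private lemma log_of_rel (U Δ B A a : ℝ) (hU : 0 < U) (hΔ : 0 < Δ)
    (hB : 0 < B) (hA : 0 < A) (ha : 0 < a)
    (h : (1 + Δ) * a ^ Δ * (A / B) = U ^ Δ) :
    Real.log (1 + Δ) + Δ * Real.log a + Real.log A - Real.log B = Δ * Real.log U := by
  have h1 : (0:ℝ) < 1 + Δ := by linarith
  have := congrArg Real.log h
  rw [Real.log_mul (by positivity) (by positivity), Real.log_mul (by positivity) (by positivity),
    Real.log_div (by positivity) (by positivity), Real.log_rpow ha, Real.log_rpow hU] at this
  linarith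

private lemma key1 (U Δ₃ Δ₄ : ℝ) (hU : 0 < U) (hΔ₃ : 0 < Δ₃) (hΔ₄ : 0 < Δ₄) (hne : Δ₃ ≠ Δ₄)
    (B A3 A4 a3 a4 : ℝ) (hB : 0 < B) (hA3 : 0 < A3) (hA4 : 0 < A4) (ha3 : 0 < a3) (ha4 : 0 < a4)
    (h3 : (1 + Δ₃) * a3 ^ Δ₃ * (A3 / B) = U ^ Δ₃)
    (h4 : (1 + Δ₄) * a4 ^ Δ₄ * (A4 / B) = U ^ Δ₄) :
    A3 ^ (Δ₄ / (Δ₃ - Δ₄)) * A4 ^ (-Δ₃ / (Δ₃ - Δ₄)) * (a4 / a3) ^ (-(Δ₃ * Δ₄) / (Δ₃ - Δ₄))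
      = B⁻¹ * ((1 + Δ₄) ^ (Δ₃ / (Δ₃ - Δ₄)) / (1 + Δ₃) ^ (Δ₄ / (Δ₃ - Δ₄))) := by
  have hD : Δ₃ - Δ₄ ≠ 0 := sub_ne_zero.mpr hne
  have hL3 := log_of_rel U Δ₃ B A3 a3 hU hΔ₃ hB hA3 ha3 h3
  have hL4 := log_of_rel U Δ₄ B A4 a4 hU hΔ₄ hB hA4 ha4 h4
  have h13 : (0:ℝ) < 1 + Δ₃ := by linarith
  have h14 : (0:ℝ) < 1 + Δ₄ := by linarith
  have hl : (0:ℝ) < A3 ^ (Δ₄ / (Δ₃ - Δ₄)) * A4 ^ (-Δ₃ / (Δ₃ - Δ₄)) *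
      (a4 / a3) ^ (-(Δ₃ * Δ₄) / (Δ₃ - Δ₄)) := by positivity
  have hr : (0:ℝ) < B⁻¹ * ((1 + Δ₄) ^ (Δ₃ / (Δ₃ - Δ₄)) / (1 + Δ₃) ^ (Δ₄ / (Δ₃ - Δ₄))) := by
    positivity
  rw [← Real.exp_log hl, ← Real.exp_log hr]
  congr 1
  rw [Real.log_mul (by positivity) (by positivity), Real.log_mul (by positivity) (by positivity),
    Real.log_mul (by positivity) (by positivity),
    Real.log_div (by positivity) (by positivity),
    Real.log_rpow hA3, Real.log_rpow hA4, Real.log_rpow (by positivity),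
    Real.log_rpow h14, Real.log_rpow h13, Real.log_div (ne_of_gt ha4) (ne_of_gt ha3),
    Real.log_inv]
  field_simp
  ring_nf
  nlinarith [hL3, hL4, mul_self_nonneg (Δ₃ - Δ₄)]

private lemma key2 (U Δ₃ Δ₄ : ℝ) (hU : 0 < U) (hΔ₃ : 0 < Δ₃) (hΔ₄ : 0 < Δ₄) (hne : Δ₃ ≠ Δ₄)
    (B₃ B₄ A₃ A₄ a₃ a₄ : ℝ) (hB₃ : 0 < B₃) (hB₄ : 0 < B₄)
    (hA₃ : 0 < A₃) (hA₄ : 0 < A₄) (ha₃ : 0 < a₃) (ha₄ : 0 < a₄)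
    (h3 : (1 + Δ₃) * a₃ ^ Δ₃ * (A₃ / B₃) = U ^ Δ₃)
    (h4 : (1 + Δ₄) * a₄ ^ Δ₄ * (A₄ / B₄) = U ^ Δ₄) :
    (a₃ / a₄) ^ (Δ₃ * Δ₄ / (Δ₃ - Δ₄)) * (A₃ / B₃) ^ (Δ₄ / (Δ₃ - Δ₄)) *
        (A₄ / B₄) ^ (-Δ₃ / (Δ₃ - Δ₄))
      = (1 + Δ₄) ^ (Δ₃ / (Δ₃ - Δ₄)) / (1 + Δ₃) ^ (Δ₄ / (Δ₃ - Δ₄)) := by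
  have hD : Δ₃ - Δ₄ ≠ 0 := sub_ne_zero.mpr hne
  have hL3 := log_of_rel U Δ₃ B₃ A₃ a₃ hU hΔ₃ hB₃ hA₃ ha₃ h3
  have hL4 := log_of_rel U Δ₄ B₄ A₄ a₄ hU hΔ₄ hB₄ hA₄ ha₄ h4
  have h13 : (0:ℝ) < 1 + Δ₃ := by linarith
  have h14 : (0:ℝ) < 1 + Δ₄ := by linarith
  have hl : (0:ℝ) < (a₃ / a₄) ^ (Δ₃ * Δ₄ / (Δ₃ - Δ₄)) * (A₃ / B₃) ^ (Δ₄ / (Δ₃ - Δ₄)) *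
      (A₄ / B₄) ^ (-Δ₃ / (Δ₃ - Δ₄)) := by positivity
  have hr : (0:ℝ) < (1 + Δ₄) ^ (Δ₃ / (Δ₃ - Δ₄)) / (1 + Δ₃) ^ (Δ₄ / (Δ₃ - Δ₄)) := by positivity
  rw [← Real.exp_log hl, ← Real.exp_log hr]
  congr 1
  rw [Real.log_mul (by positivity) (by positivity), Real.log_mul (by positivity) (by positivity),
    Real.log_div (by positivity) (by positivity),
    Real.log_rpow (by positivity), Real.log_rpow (by positivity), Real.log_rpow (by positivity),
    Real.log_rpow h14, Real.log_rpow h13,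
    Real.log_div (ne_of_gt ha₃) (ne_of_gt ha₄),
    Real.log_div (ne_of_gt hA₃) (ne_of_gt hB₃), Real.log_div (ne_of_gt hA₄) (ne_of_gt hB₄)]
  field_simp
  ring_nf
  nlinarith [hL3, hL4, mul_self_nonneg (Δ₃ - Δ₄)]

private lemma cos_part (U B A2 c : ℝ) (hU : 0 < U) (hB : 0 < B) (hc : c ≠ 0)
    (h : A2 / B = 1 / 2 * (1 + Real.sin (2 * U) / (2 * U)) / c ^ 2) :
    A2 * c ^ 2 = B * (1 / 2 * (1 + Real.sin (2 * U) / (2 * U))) := by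
  have hc2 : c ^ 2 ≠ 0 := pow_ne_zero _ hc
  field_simp [hc2] at h ⊢
  linear_combination h

private lemma sin_part (U B A1 c : ℝ) (hU : 0 < U) (hB : 0 < B) (hc : c ≠ 0)
    (h : A1 / B = 1 / 2 * (1 - Real.sin (2 * U) / (2 * U)) / c ^ 2) :
    A1 * c ^ 2 = B * (1 / 2 * (1 - Real.sin (2 * U) / (2 * U))) := by
  have hc2 : c ^ 2 ≠ 0 := pow_ne_zero _ hc
  field_simp [hc2] at h ⊢
  linear_combination h

theorem exact_ternary_complete_hybrid_formula
    (U Δ₃ Δ₄ : ℝ) (hU : 0 < U) (hΔ₃ : 0 < Δ₃) (hΔ₄ : 0 < Δ₄) (hne : Δ₃ ≠ Δ₄)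
    -- data for the first variant (formula (4.4))
    (θ₁ θ₂ : ℝ) (hθ₁ : Real.sin θ₁ ≠ 0) (hθ₂ : Real.cos θ₂ ≠ 0)
    (B₁ B₂ A3₁ A3₂ A4₁ A4₂ a3₁ a3₂ a4₁ a4₂ A1 A2 : ℝ)
    (hB₁ : 0 < B₁) (hB₂ : 0 < B₂)
    (hA3₁ : 0 < A3₁) (hA3₂ : 0 < A3₂) (hA4₁ : 0 < A4₁) (hA4₂ : 0 < A4₂)
    (ha3₁ : 0 < a3₁) (ha3₂ : 0 < a3₂) (ha4₁ : 0 < a4₁) (ha4₂ : 0 < a4₂)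
    (hA1 : 0 < A1) (hA2 : 0 < A2)
    (h1 : A1 / B₁ = 1 / 2 * (1 - Real.sin (2 * U) / (2 * U)) / Real.sin θ₁ ^ 2)
    (h2 : A2 / B₂ = 1 / 2 * (1 + Real.sin (2 * U) / (2 * U)) / Real.cos θ₂ ^ 2)
    (h3₁ : (1 + Δ₃) * a3₁ ^ Δ₃ * (A3₁ / B₁) = U ^ Δ₃)
    (h3₂ : (1 + Δ₃) * a3₂ ^ Δ₃ * (A3₂ / B₂) = U ^ Δ₃)
    (h4₁ : (1 + Δ₄) * a4₁ ^ Δ₄ * (A4₁ / B₁) = U ^ Δ₄)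
    (h4₂ : (1 + Δ₄) * a4₂ ^ Δ₄ * (A4₂ / B₂) = U ^ Δ₄)
    -- data for the second variant (formula (5.4))
    (B₃ B₄ A1₃ A1₄ A2₃ A2₄ : ℝ) (θ1₃ θ1₄ θ2₃ θ2₄ : ℝ)
    (hB₃ : 0 < B₃) (hB₄ : 0 < B₄)
    (hA1₃ : 0 < A1₃) (hA1₄ : 0 < A1₄) (hA2₃ : 0 < A2₃) (hA2₄ : 0 < A2₄)
    (hθ1₃ : Real.sin θ1₃ ≠ 0) (hθ1₄ : Real.sin θ1₄ ≠ 0)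
    (hθ2₃ : Real.cos θ2₃ ≠ 0) (hθ2₄ : Real.cos θ2₄ ≠ 0)
    (h1₃ : A1₃ / B₃ = 1 / 2 * (1 - Real.sin (2 * U) / (2 * U)) / Real.sin θ1₃ ^ 2)
    (h1₄ : A1₄ / B₄ = 1 / 2 * (1 - Real.sin (2 * U) / (2 * U)) / Real.sin θ1₄ ^ 2)
    (h2₃ : A2₃ / B₃ = 1 / 2 * (1 + Real.sin (2 * U) / (2 * U)) / Real.cos θ2₃ ^ 2)
    (h2₄ : A2₄ / B₄ = 1 / 2 * (1 + Real.sin (2 * U) / (2 * U)) / Real.cos θ2₄ ^ 2)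
    (a₃ a₄ A₃ A₄ : ℝ) (ha₃ : 0 < a₃) (ha₄ : 0 < a₄) (hA₃ : 0 < A₃) (hA₄ : 0 < A₄)
    (h3 : (1 + Δ₃) * a₃ ^ Δ₃ * (A₃ / B₃) = U ^ Δ₃)
    (h4 : (1 + Δ₄) * a₄ ^ Δ₄ * (A₄ / B₄) = U ^ Δ₄) :
    A2 * A3₂ ^ (Δ₄ / (Δ₃ - Δ₄)) * A4₂ ^ (-Δ₃ / (Δ₃ - Δ₄)) *
        (a4₂ / a3₂) ^ (-(Δ₃ * Δ₄) / (Δ₃ - Δ₄)) * Real.cos θ₂ ^ 2 +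
      A1 * A3₁ ^ (Δ₄ / (Δ₃ - Δ₄)) * A4₁ ^ (-Δ₃ / (Δ₃ - Δ₄)) *
        (a4₁ / a3₁) ^ (-(Δ₃ * Δ₄) / (Δ₃ - Δ₄)) * Real.sin θ₁ ^ 2 =
    (a₃ / a₄) ^ (Δ₃ * Δ₄ / (Δ₃ - Δ₄)) *
        (A₃ / (A2₃ * Real.cos θ2₃ ^ 2 + A1₃ * Real.sin θ1₃ ^ 2)) ^ (Δ₄ / (Δ₃ - Δ₄)) *
        (A₄ / (A2₄ * Real.cos θ2₄ ^ 2 + A1₄ * Real.sin θ1₄ ^ 2)) ^ (-Δ₃ / (Δ₃ - Δ₄)) := by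
  set s : ℝ := Real.sin (2 * U) / (2 * U) with hs
  set C : ℝ := (1 + Δ₄) ^ (Δ₃ / (Δ₃ - Δ₄)) / (1 + Δ₃) ^ (Δ₄ / (Δ₃ - Δ₄)) with hC
  -- the two product terms on the left collapse
  have e2 := key1 U Δ₃ Δ₄ hU hΔ₃ hΔ₄ hne B₂ A3₂ A4₂ a3₂ a4₂ hB₂ hA3₂ hA4₂ ha3₂ ha4₂ h3₂ h4₂
  have e1 := key1 U Δ₃ Δ₄ hU hΔ₃ hΔ₄ hne B₁ A3₁ A4₁ a3₁ a4₁ hB₁ hA3₁ hA4₁ ha3₁ ha4₁ h3₁ h4₁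
  -- trigonometric weights
  have c2 : A2 * Real.cos θ₂ ^ 2 = B₂ * (1 / 2 * (1 + s)) := cos_part U B₂ A2 _ hU hB₂ hθ₂ h2
  have c1 : A1 * Real.sin θ₁ ^ 2 = B₁ * (1 / 2 * (1 - s)) := sin_part U B₁ A1 _ hU hB₁ hθ₁ h1
  -- the denominators on the right equal B₃ and B₄
  have d3 : A2₃ * Real.cos θ2₃ ^ 2 + A1₃ * Real.sin θ1₃ ^ 2 = B₃ := by
    have u := cos_part U B₃ A2₃ _ hU hB₃ hθ2₃ h2₃
    have v := sin_part U B₃ A1₃ _ hU hB₃ hθ1₃ h1₃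
    rw [u, v]; ring
  have d4 : A2₄ * Real.cos θ2₄ ^ 2 + A1₄ * Real.sin θ1₄ ^ 2 = B₄ := by
    have u := cos_part U B₄ A2₄ _ hU hB₄ hθ2₄ h2₄
    have v := sin_part U B₄ A1₄ _ hU hB₄ hθ1₄ h1₄
    rw [u, v]; ring
  have eR := key2 U Δ₃ Δ₄ hU hΔ₃ hΔ₄ hne B₃ B₄ A₃ A₄ a₃ a₄ hB₃ hB₄ hA₃ hA₄ ha₃ ha₄ h3 h4
  calc
    A2 * A3₂ ^ (Δ₄ / (Δ₃ - Δ₄)) * A4₂ ^ (-Δ₃ / (Δ₃ - Δ₄)) *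
          (a4₂ / a3₂) ^ (-(Δ₃ * Δ₄) / (Δ₃ - Δ₄)) * Real.cos θ₂ ^ 2 +
        A1 * A3₁ ^ (Δ₄ / (Δ₃ - Δ₄)) * A4₁ ^ (-Δ₃ / (Δ₃ - Δ₄)) *
          (a4₁ / a3₁) ^ (-(Δ₃ * Δ₄) / (Δ₃ - Δ₄)) * Real.sin θ₁ ^ 2
      = (A3₂ ^ (Δ₄ / (Δ₃ - Δ₄)) * A4₂ ^ (-Δ₃ / (Δ₃ - Δ₄)) *
            (a4₂ / a3₂) ^ (-(Δ₃ * Δ₄) / (Δ₃ - Δ₄))) * (A2 * Real.cos θ₂ ^ 2) +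
          (A3₁ ^ (Δ₄ / (Δ₃ - Δ₄)) * A4₁ ^ (-Δ₃ / (Δ₃ - Δ₄)) *
            (a4₁ / a3₁) ^ (-(Δ₃ * Δ₄) / (Δ₃ - Δ₄))) * (A1 * Real.sin θ₁ ^ 2) := by ring
    _ = (B₂⁻¹ * C) * (B₂ * (1 / 2 * (1 + s))) + (B₁⁻¹ * C) * (B₁ * (1 / 2 * (1 - s))) := by
          rw [e1, e2, c1, c2]
    _ = C := by field_simp [ne_of_gt hB₁, ne_of_gt hB₂]; ring
    _ = (a₃ / a₄) ^ (Δ₃ * Δ₄ / (Δ₃ - Δ₄)) *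
          (A₃ / (A2₃ * Real.cos θ2₃ ^ 2 + A1₃ * Real.sin θ1₃ ^ 2)) ^ (Δ₄ / (Δ₃ - Δ₄)) *
          (A₄ / (A2₄ * Real.cos θ2₄ ^ 2 + A1₄ * Real.sin θ1₄ ^ 2)) ^ (-Δ₃ / (Δ₃ - Δ₄)) := by
          rw [d3, d4, eR]
end
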